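/- Let f^1, f^2, f^3 be monomials in S = k[x,y,z,...] and set β_1 = (f^{1,2}/f^2)e_2 − (f^{1,2}/f^1)e_1, β_2 = (f^{2,3}/f^3)e_3 − (f^{2,3}/f^2)e_2, β_3 = (f^{1,3}/f^3)e_3 − (f^{1,3}/f^1)e_1 (with f^{i,j} = lcm(f^i,f^j)). Then β_1, β_2, β_3 generate the kernel of the map S^3 → S, e_i ↦ f^i. In contrast, if f^1 = x, f^2 = x+y, f^3 = y (non-monomials), the element (1, −1, 1) lies in the kernel of (s_1,s_2,s_3) ↦ s_1 f^1 + s_2 f^2 + s_3 f^3 but not in the submodule generated by (f^2, −f^1, 0), (−f^3, 0, f^1), (0, f^3, −f^2). -/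

import Mathlib

open MvPolynomial

section Helpers

variable (K : Type*) [Field K] {d : ℕ}

/-- The Koszul-type syzygy vectors, for arbitrary (not necessarily ordered) indices. -/
noncomputable def gam (a : Fin 3 → (Fin d →₀ ℕ)) (μ ν : Fin 3) :
    Fin 3 → MvPolynomial (Fin d) K :=
  Pi.single ν (monomial (a μ ⊔ a ν - a ν) (1 : K))
    - Pi.single μ (monomial (a μ ⊔ a ν - a μ) (1 : K))

/-- The generating set of part (a). -/
def genSet (a : Fin 3 → (Fin d →₀ ℕ)) : Set (Fin 3 → MvPolynomial (Fin d) K) :=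
  { b : Fin 3 → MvPolynomial (Fin d) K | ∃ μ ν : Fin 3, μ < ν ∧
      b = Pi.single ν (monomial (a μ ⊔ a ν - a ν) (1 : K))
        - Pi.single μ (monomial (a μ ⊔ a ν - a μ) (1 : K)) }

lemma gam_mem (a : Fin 3 → (Fin d →₀ ℕ)) {μ ν : Fin 3} (h : μ ≠ ν) :
    gam K a μ ν ∈ Submodule.span (MvPolynomial (Fin d) K) (genSet K a) := by
  rcases h.lt_or_gt with hlt | hlt
  · exact Submodule.subset_span ⟨μ, ν, hlt, rfl⟩
  · have : (gam K a μ ν : Fin 3 → MvPolynomial (Fin d) K) = -(gam K a ν μ) := by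
      simp only [gam, sup_comm (a ν) (a μ)]
      abel
    rw [this]
    exact neg_mem (Submodule.subset_span ⟨ν, μ, hlt, rfl⟩)

lemma single_sum (a : Fin 3 → (Fin d →₀ ℕ)) (ν : Fin 3) (p : MvPolynomial (Fin d) K) :
    ∑ i : Fin 3, (Pi.single ν p : Fin 3 → MvPolynomial (Fin d) K) i * monomial (a i) (1 : K)
      = p * monomial (a ν) 1 := by
  rw [Finset.sum_eq_single ν]
  · rw [Pi.single_eq_same]
  · intro b _ hb
    rw [Pi.single_eq_of_ne hb, zero_mul]
  · simp

lemma gam_ker (a : Fin 3 → (Fin d →₀ ℕ)) (μ ν : Fin 3) :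
    ∑ i : Fin 3, (gam K a μ ν : Fin 3 → MvPolynomial (Fin d) K) i * monomial (a i) (1 : K) = 0 := by
  simp only [gam, Pi.sub_apply, sub_mul]
  rw [Finset.sum_sub_distrib, single_sum, single_sum, monomial_mul, monomial_mul,
    tsub_add_cancel_of_le le_sup_right, tsub_add_cancel_of_le le_sup_left, sub_self]

lemma key (a : Fin 3 → (Fin d →₀ ℕ)) :
    ∀ (n : ℕ) (s : Fin 3 → MvPolynomial (Fin d) K),
      (∑ i : Fin 3, (s i).support.card) ≤ n →
      (∑ i : Fin 3, s i * monomial (a i) (1 : K)) = 0 →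
      s ∈ Submodule.span (MvPolynomial (Fin d) K) (genSet K a) := by
  intro n
  induction n with
  | zero =>
    intro s hcard _
    have hs : s = 0 := by
      funext i
      have h1 : (s i).support.card = 0 :=
        Nat.le_zero.mp (le_trans (Finset.single_le_sum
          (f := fun i => (s i).support.card)
          (fun i _ => Nat.zero_le _) (Finset.mem_univ i)) hcard)
      have : (s i).support = ∅ := Finset.card_eq_zero.mp h1
      exact (MvPolynomial.support_eq_empty.mp this)
    rw [hs]
    exact zero_mem _
  | succ n ih =>
    intro s hcard hker
    by_cases hs : s = 0
    · rw [hs]; exact zero_mem _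
    · -- pick μ with s μ ≠ 0 and b' in its support
      have : ∃ μ, s μ ≠ 0 := by
        by_contra h
        push_neg at h
        exact hs (funext h)
      obtain ⟨μ, hμ⟩ := this
      obtain ⟨b', hb'⟩ := support_nonempty.mpr hμ
      set b : Fin d →₀ ℕ := b' + a μ with hb
      have hμle : a μ ≤ b := le_add_self
      have hbμ : b - a μ = b' := add_tsub_cancel_right b' (a μ)
      have hcμ : coeff b' (s μ) ≠ 0 := MvPolynomial.mem_support_iff.mp hb'
      -- coefficient relation at degree b
      have h1 : ∑ i : Fin 3, (if a i ≤ b then coeff (b - a i) (s i) * 1 else 0) = 0 := by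
        have := congrArg (coeff b) hker
        rw [coeff_sum] at this
        simp only [coeff_mul_monomial'] at this
        simpa using this
      -- find second index ν
      have : ∃ ν, ν ≠ μ ∧ a ν ≤ b ∧ coeff (b - a ν) (s ν) ≠ 0 := by
        by_contra h
        push_neg at h
        have h2 : ∑ i : Fin 3, (if a i ≤ b then coeff (b - a i) (s i) * 1 else 0)
            = (if a μ ≤ b then coeff (b - a μ) (s μ) * 1 else 0) := by
          apply Finset.sum_eq_single
          · intro ν _ hν
            by_cases hle : a ν ≤ b
            · rw [if_pos hle]
              rw [h ν hν hle, zero_mul]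
            · rw [if_neg hle]
          · intro h'; exact absurd (Finset.mem_univ μ) h'
        rw [h1, if_pos hμle, hbμ, mul_one] at h2
        exact hcμ h2.symm
      obtain ⟨ν, hνμ, hνle, hcν⟩ := this
      set c : K := coeff b' (s μ) with hc
      set l : Fin d →₀ ℕ := a μ ⊔ a ν with hl
      have hlle : l ≤ b := sup_le hμle hνle
      set t : MvPolynomial (Fin d) K := monomial (b - l) c with ht
      set s' : Fin 3 → MvPolynomial (Fin d) K := s + t • gam K a μ ν with hs'
      -- values of s'
      have hγμ : (gam K a μ ν : Fin 3 → MvPolynomial (Fin d) K) μ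
          = -(monomial (l - a μ) (1 : K)) := by
        simp [gam, Pi.single_eq_of_ne (Ne.symm hνμ), hl]
      have hγν : (gam K a μ ν : Fin 3 → MvPolynomial (Fin d) K) ν
          = monomial (l - a ν) (1 : K) := by
        simp [gam, Pi.single_eq_of_ne hνμ, hl]
      have hmulμ : t * monomial (l - a μ) (1 : K) = monomial b' c := by
        rw [monomial_mul, mul_one, tsub_add_tsub_cancel hlle le_sup_left, hbμ]
      have hmulν : t * monomial (l - a ν) (1 : K) = monomial (b - a ν) c := by
        rw [monomial_mul, mul_one, tsub_add_tsub_cancel hlle le_sup_right]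
      have hs'μ : s' μ = s μ - monomial b' c := by
        simp only [hs', Pi.add_apply, Pi.smul_apply, smul_eq_mul, hγμ, mul_neg, hmulμ]
        ring
      have hs'ν : s' ν = s ν + monomial (b - a ν) c := by
        simp only [hs', Pi.add_apply, Pi.smul_apply, smul_eq_mul, hγν, hmulν]
      have hs'other : ∀ i, i ≠ μ → i ≠ ν → s' i = s i := by
        intro i hiμ hiν
        simp only [hs', Pi.add_apply, Pi.smul_apply, smul_eq_mul, gam, Pi.sub_apply,
          Pi.single_eq_of_ne hiν, Pi.single_eq_of_ne hiμ]
        ring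
      -- measure decreases
      have hsupμ : (s' μ).support ⊆ (s μ).support := by
        intro x hx
        rw [MvPolynomial.mem_support_iff] at hx ⊢
        rw [hs'μ] at hx
        by_cases hxb : x = b'
        · subst hxb; exact hcμ
        · intro h0
          apply hx
          rw [MvPolynomial.coeff_sub, h0, coeff_monomial, if_neg (fun h => hxb h.symm), sub_zero]
      have hb'notin : b' ∉ (s' μ).support := by
        rw [MvPolynomial.notMem_support_iff, hs'μ, MvPolynomial.coeff_sub, coeff_monomial,
          if_pos rfl, hc, sub_self]
      have hcardμ : (s' μ).support.card < (s μ).support.card :=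
        Finset.card_lt_card ⟨hsupμ, fun h => hb'notin (h hb')⟩
      have hsupν : (s' ν).support ⊆ (s ν).support := by
        intro x hx
        rw [MvPolynomial.mem_support_iff] at hx ⊢
        rw [hs'ν] at hx
        by_cases hxb : x = b - a ν
        · subst hxb; exact hcν
        · intro h0
          apply hx
          rw [MvPolynomial.coeff_add, h0, coeff_monomial, if_neg (fun h => hxb h.symm), add_zero]
      have hcardall : ∀ i, (s' i).support.card ≤ (s i).support.card := by
        intro i
        by_cases hiμ : i = μ
        · subst hiμ; exact hcardμ.le
        by_cases hiν : i = ν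
        · subst hiν; exact Finset.card_le_card hsupν
        · rw [hs'other i hiμ hiν]
      have hmeas : (∑ i : Fin 3, (s' i).support.card) < ∑ i : Fin 3, (s i).support.card :=
        Finset.sum_lt_sum (fun i _ => hcardall i) ⟨μ, Finset.mem_univ μ, hcardμ⟩
      -- s' is in the kernel
      have hker' : (∑ i : Fin 3, s' i * monomial (a i) (1 : K)) = 0 := by
        simp only [hs', Pi.add_apply, Pi.smul_apply, smul_eq_mul, add_mul]
        rw [Finset.sum_add_distrib, hker, zero_add]
        have h2 : ∑ x : Fin 3, t * (gam K a μ ν x * monomial (a x) (1 : K)) = 0 := by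
          rw [← Finset.mul_sum, gam_ker, mul_zero]
        simpa [mul_assoc] using h2
      have hmem' : s' ∈ Submodule.span (MvPolynomial (Fin d) K) (genSet K a) :=
        ih s' (by omega) hker'
      have : s = s' - t • gam K a μ ν := by rw [hs']; abel
      rw [this]
      exact sub_mem hmem' (Submodule.smul_mem _ _ (gam_mem K a (Ne.symm hνμ)))

end Helpers

theorem stmt18 {K : Type*} [Field K] :
    (∀ d : ℕ, ∀ a : Fin 3 → (Fin d →₀ ℕ),
      LinearMap.ker (Fintype.linearCombination (MvPolynomial (Fin d) K)
          (fun μ => (monomial (a μ) (1 : K)))) =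
        Submodule.span (MvPolynomial (Fin d) K)
          { b : Fin 3 → MvPolynomial (Fin d) K | ∃ μ ν : Fin 3, μ < ν ∧
              b = Pi.single ν (monomial (a μ ⊔ a ν - a ν) (1 : K))
                - Pi.single μ (monomial (a μ ⊔ a ν - a μ) (1 : K)) }) ∧
    (letI S := MvPolynomial (Fin 2) K
     letI f : Fin 3 → S := ![X 0, X 0 + X 1, X 1]
     letI v : Fin 3 → S := ![1, -1, 1]
     (∑ i : Fin 3, v i * f i = 0) ∧
       v ∉ Submodule.span S
         ({![f 1, -(f 0), 0], ![-(f 2), 0, f 0], ![0, f 2, -(f 1)]} : Set (Fin 3 → S))) := by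
  constructor
  · intro d a
    ext s
    rw [LinearMap.mem_ker, Fintype.linearCombination_apply]
    simp only [smul_eq_mul]
    constructor
    · intro h
      exact key K a _ s le_rfl h
    · intro h
      induction h using Submodule.span_induction with
      | mem x hx =>
        obtain ⟨μ, ν, hlt, rfl⟩ := hx
        exact gam_ker K a μ ν
      | zero => simp
      | add x y _ _ hx hy => simp [add_mul, Finset.sum_add_distrib, hx, hy]
      | smul r x _ hx =>
        simp only [Pi.smul_apply, smul_eq_mul, mul_assoc, ← Finset.mul_sum, hx, mul_zero]
  · refine ⟨by simp [Fin.sum_univ_three], ?_⟩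
    intro hmem
    have hle : ({![![X 0, X 0 + X 1, X 1] 1, -(![X 0, X 0 + X 1, X 1] 0), 0],
        ![-(![X 0, X 0 + X 1, X 1] 2), 0, ![X 0, X 0 + X 1, X 1] 0],
        ![0, ![X 0, X 0 + X 1, X 1] 2, -(![X 0, X 0 + X 1, X 1] 1)]} :
          Set (Fin 3 → MvPolynomial (Fin 2) K)) ⊆
        (Submodule.comap (LinearMap.proj 0)
          (RingHom.ker (constantCoeff : MvPolynomial (Fin 2) K →+* K)) :
            Submodule (MvPolynomial (Fin 2) K) (Fin 3 → MvPolynomial (Fin 2) K)) := by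
      intro w hw
      rcases hw with h | h | h <;> subst h <;>
        simp [Submodule.mem_comap, RingHom.mem_ker]
    have := Submodule.span_le.mpr hle hmem
    simp only [Submodule.mem_comap, RingHom.mem_ker] at this
    simp at this
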